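/- arXiv:2106.07265 — 2 statements merged into one kernel-verified Lean document; each statement's English description precedes it below -/
import Mathlib

section
/- Let α ∈ (1,2), d > 1, let τ be a continuously differentiable admissable function with respect to 1/α and d, let μ be the Borel measure on (0,∞) with μ((t,∞)) = t^{−1/α} τ(log t) for all t > 0, and define ξ(s) = ∫₀^∞ (1 − e^{−st}) dμ(t) for s > 0. Then for every s > 0, ξ′(s) = ∫₀^∞ e^{−st} t dμ(t) = ∫₀^∞ e^{−st} t^{−1/α} ( (1/α) τ(log t) − τ′(log t) ) dt. -/
open MeasureTheory Set Filter Real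
open Topology NNReal ENNReal

noncomputable section

/-- `ψ` is a Bernstein function: `C^∞` on `(0,∞)`, nonnegative on `(0,∞)`,
and `(−1)^(n−1) ψ^(n)(x) ≥ 0` for all `n ≥ 1` and `x > 0`. -/
def IsBernstein (ψ : ℝ → ℝ) : Prop :=
  ContDiffOn ℝ (⊤ : ℕ∞) ψ (Set.Ioi 0) ∧
  (∀ x > (0:ℝ), 0 ≤ ψ x) ∧
  ∀ n : ℕ, 0 < n → ∀ x > (0:ℝ), 0 ≤ (-1 : ℝ) ^ (n - 1) * iteratedDeriv n ψ x

/-- `ψ` is a self-similar Bernstein function w.r.t. `α` and `c`: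
it is Bernstein and `ψ(c^(1/α) x) = c·ψ(x)` for all `x > 0`. -/
def IsSelfSimilarBernstein (ψ : ℝ → ℝ) (α c : ℝ) : Prop :=
  IsBernstein ψ ∧ ∀ x > (0:ℝ), ψ (c ^ (1/α) * x) = c * ψ x

/-- `θ` is admissable w.r.t. `α` and `c`: positive, `t ↦ t^(−α) θ(log t)` non-increasing
on `(0,∞)`, and `log (c^(1/α))`-periodic. -/
def IsAdmissable (θ : ℝ → ℝ) (α c : ℝ) : Prop :=
  (∀ x : ℝ, 0 < θ x) ∧
  AntitoneOn (fun t : ℝ => t ^ (-α) * θ (Real.log t)) (Set.Ioi 0) ∧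
  Function.Periodic θ (Real.log (c ^ (1/α)))

/-- `φ` is the Borel measure concentrated on `(0,∞)` with tail
`φ((t,∞)) = t^(−α) θ(log t)` for `t > 0`. -/
def IsTailMeasure (φ : MeasureTheory.Measure ℝ) (α : ℝ) (θ : ℝ → ℝ) : Prop :=
  φ (Set.Iic 0) = 0 ∧
  ∀ t > (0:ℝ), φ (Set.Ioi t) = ENNReal.ofReal (t ^ (-α) * θ (Real.log t))

/-- `θ` is "smooth" in the sense of the paper: continuous and piecewise continuously
differentiable (here: `C¹` off a closed countable set). -/
def IsPiecewiseC1 (θ : ℝ → ℝ) : Prop :=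
  Continuous θ ∧ ∃ S : Set ℝ, S.Countable ∧ IsClosed S ∧ ContDiffOn ℝ 1 θ Sᶜ

namespace Stmt16Aux

variable {β p : ℝ}

set_option maxHeartbeats 4000000 in
theorem main (β p : ℝ) (hβ0 : 0 < β) (hβ1 : β < 1) (hp : 0 < p)
    (τ : ℝ → ℝ) (hτC1 : ContDiff ℝ 1 τ) (hpos : ∀ x, 0 < τ x)
    (hanti : AntitoneOn (fun t : ℝ => t ^ (-β) * τ (Real.log t)) (Set.Ioi 0))
    (hper : Function.Periodic τ p)
    (μ : Measure ℝ)
    (hμt : ∀ t > (0:ℝ), μ (Set.Ioi t) = ENNReal.ofReal (t ^ (-β) * τ (Real.log t)))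
    (s : ℝ) (hs : 0 < s) :
    HasDerivAt (fun s : ℝ => ∫ t in Set.Ioi (0:ℝ), (1 - Real.exp (-(s * t))) ∂μ)
      (∫ t in Set.Ioi (0:ℝ), Real.exp (-(s * t)) * t ∂μ) s ∧
    (∫ t in Set.Ioi (0:ℝ), Real.exp (-(s * t)) * t ∂μ) =
      ∫ t in Set.Ioi (0:ℝ), Real.exp (-(s * t)) *
        (t ^ (-β) * (β * τ (Real.log t) - deriv τ (Real.log t))) := by
  -- basic objects
  set h : ℝ → ℝ := fun x => β * τ x - deriv τ x with hhdef
  set f : ℝ → ℝ := fun t => t ^ (-β - 1) * h (Real.log t) with hfdef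
  set F : ℝ → ℝ := fun t => t ^ (-β) * τ (Real.log t) with hFdef
  have hconth : Continuous h := (continuous_const.mul hτC1.continuous).sub
    (hτC1.continuous_deriv le_rfl)
  -- deriv τ is periodic
  have hperd : Function.Periodic (deriv τ) p := by
    intro x
    have h1 : deriv (fun y => τ (y + p)) x = deriv τ (x + p) := deriv_comp_add_const τ p x
    have h2 : (fun y => τ (y + p)) = τ := funext fun y => hper y
    rw [← h1, h2]
  have hperh : Function.Periodic h p := fun x => by
    simp only [hhdef, hper x, hperd x]
  -- bound for h
  obtain ⟨K, hK⟩ : ∃ K : ℝ, ∀ x : ℝ, |h x| ≤ K := by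
    obtain ⟨K, hK⟩ := (isCompact_Icc : IsCompact (Icc (0:ℝ) p)).exists_bound_of_continuousOn
      hconth.continuousOn
    refine ⟨K, fun x => ?_⟩
    obtain ⟨y, hy, hxy⟩ := hperh.exists_mem_Ico₀ hp x
    rw [hxy]
    simpa using hK y (Ico_subset_Icc_self hy)
  have hK0 : 0 ≤ K := le_trans (abs_nonneg _) (hK 0)
  have hKle : ∀ x, h x ≤ K := fun x => (le_abs_self _).trans (hK x)
  -- rpow arithmetic
  have hrw : ∀ t : ℝ, 0 < t → t ^ (-β - 1) * t = t ^ (-β) := by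
    intro t ht
    rw [show -β - 1 = -β + (-1) by ring, Real.rpow_add ht, Real.rpow_neg_one]
    field_simp
  -- derivative of F
  have hFderiv : ∀ t : ℝ, 0 < t → HasDerivAt F (-(f t)) t := by
    intro t ht
    have h1 : HasDerivAt (fun u : ℝ => u ^ (-β)) (-β * t ^ (-β - 1)) t := by
      simpa using Real.hasDerivAt_rpow_const (p := -β) (Or.inl ht.ne')
    have h2 : HasDerivAt (fun u : ℝ => τ (Real.log u)) (deriv τ (Real.log t) * t⁻¹) t :=
      (((hτC1.differentiable one_ne_zero) (Real.log t)).hasDerivAt).comp t (Real.hasDerivAt_log ht.ne')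
    have h3 : HasDerivAt (fun u : ℝ => u ^ (-β) * τ (Real.log u))
        (-β * t ^ (-β - 1) * τ (Real.log t) + t ^ (-β) * (deriv τ (Real.log t) * t⁻¹)) t :=
      h1.mul h2
    convert h3 using 1
    have ht1 : t ^ (-β) * t⁻¹ = t ^ (-β - 1) := by
      rw [show -β - 1 = -β + (-1) by ring, Real.rpow_add ht, Real.rpow_neg_one]
    simp only [hfdef, hhdef]
    rw [← ht1]
    ring
  -- nonnegativity of h
  have hf_nonneg : ∀ t : ℝ, 0 < t → 0 ≤ f t := by
    intro t ht
    have hd := hFderiv t ht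
    rw [hasDerivAt_iff_tendsto_slope] at hd
    have hd' : Tendsto (slope F t) (𝓝[>] t) (𝓝 (-(f t))) :=
      hd.mono_left (nhdsWithin_mono _ (fun u hu => ne_of_gt hu))
    have hle : ∀ᶠ u in 𝓝[>] t, slope F t u ≤ 0 := by
      filter_upwards [self_mem_nhdsWithin] with u hu
      have htu : t < u := hu
      have hF : F u ≤ F t := hanti (mem_Ioi.2 ht) (mem_Ioi.2 (ht.trans htu)) htu.le
      rw [slope_def_field]
      apply div_nonpos_of_nonpos_of_nonneg <;> linarith
    have := le_of_tendsto hd' hle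
    linarith
  have hh_nonneg : ∀ x : ℝ, 0 ≤ h x := by
    intro x
    have h1 := hf_nonneg (Real.exp x) (Real.exp_pos x)
    have h2 : (0:ℝ) < Real.exp x ^ (-β - 1) := Real.rpow_pos_of_pos (Real.exp_pos x) _
    simp only [hfdef, Real.log_exp] at h1
    nlinarith
  have hfK : ∀ t : ℝ, 0 < t → f t ≤ K * t ^ (-β - 1) := by
    intro t ht
    have h2 : (0:ℝ) ≤ t ^ (-β - 1) := (Real.rpow_pos_of_pos ht _).le
    simp only [hfdef]
    nlinarith [hKle (Real.log t)]
  -- continuity and measurability of f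
  have hcontf : ContinuousOn f (Ioi (0:ℝ)) := by
    apply ContinuousOn.mul
    · exact fun t ht => (Real.continuousAt_rpow_const t _ (Or.inl (ne_of_gt ht))).continuousWithinAt
    · exact hconth.comp_continuousOn (Real.continuousOn_log.mono (fun t ht => ne_of_gt ht))
  have hmeasf : Measurable f := by
    have h1 : Measurable (fun t : ℝ => t ^ (-β - 1)) :=
      measurable_of_continuousOn_compl_singleton 0
        (continuousOn_id.rpow_const (fun x hx => Or.inl hx))
    exact h1.mul (hconth.measurable.comp Real.measurable_log)
  -- measure identities
  have hFpos : ∀ t : ℝ, 0 < t → 0 < F t := fun t ht =>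
    mul_pos (Real.rpow_pos_of_pos ht _) (hpos _)
  have hμF : ∀ t : ℝ, 0 < t → μ (Ioi t) = ENNReal.ofReal (F t) := fun t ht => hμt t ht
  have hμIoi_ne : ∀ t : ℝ, 0 < t → μ (Ioi t) ≠ ⊤ := fun t ht => by
    rw [hμF t ht]; exact ENNReal.ofReal_ne_top
  have hμIoc : ∀ a b : ℝ, 0 < a → a ≤ b → μ (Ioc a b) = ENNReal.ofReal (F a - F b) := by
    intro a b ha hab
    have hb : 0 < b := ha.trans_le hab
    rw [← Set.Ioi_diff_Ioi,
      measure_diff (Set.Ioi_subset_Ioi hab) measurableSet_Ioi.nullMeasurableSet (hμIoi_ne b hb),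
      hμF a ha, hμF b hb, ← ENNReal.ofReal_sub _ (hFpos b hb).le]
  -- FTC
  have hFTC : ∀ a b : ℝ, 0 < a → a ≤ b → ∫ t in Ioc a b, f t = F a - F b := by
    intro a b ha hab
    have hsub : Set.uIcc a b ⊆ Ioi (0:ℝ) := by
      rw [uIcc_of_le hab]
      exact fun x hx => lt_of_lt_of_le ha hx.1
    have hint : IntervalIntegrable f volume a b := (hcontf.mono hsub).intervalIntegrable
    have := intervalIntegral.integral_eq_sub_of_hasDerivAt (f := fun t => -(F t)) (f' := f)
      (fun x hx => by have := (hFderiv x (hsub hx)).neg; rw [neg_neg] at this; exact this) hint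
    rw [intervalIntegral.integral_of_le hab] at this
    linarith [this]
  -- the density measure
  set ν : Measure ℝ :=
    (volume.restrict (Ioi (0:ℝ))).withDensity (fun t => ENNReal.ofReal (f t)) with hνdef
  have hν_apply : ∀ u : Set ℝ, MeasurableSet u → ν u = ∫⁻ t in u ∩ Ioi 0, ENNReal.ofReal (f t) := by
    intro u hu
    rw [hνdef, withDensity_apply _ hu, Measure.restrict_restrict hu]
  have hνIoc : ∀ a b : ℝ, 0 < a → a ≤ b → ν (Ioc a b) = ENNReal.ofReal (F a - F b) := by
    intro a b ha hab
    have hsub : Ioc a b ⊆ Ioi (0:ℝ) := fun x hx => ha.trans hx.1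
    rw [hν_apply _ measurableSet_Ioc, Set.inter_eq_self_of_subset_left hsub]
    have hsub2 : Icc a b ⊆ Ioi (0:ℝ) := fun x hx => lt_of_lt_of_le ha hx.1
    have hfi : IntegrableOn f (Ioc a b) volume :=
      ((hcontf.mono hsub2).integrableOn_Icc).mono_set Set.Ioc_subset_Icc_self
    rw [← ofReal_integral_eq_lintegral_ofReal hfi ?nn, hFTC a b ha hab]
    case nn =>
      filter_upwards [ae_restrict_mem measurableSet_Ioc] with t ht
      exact hf_nonneg t (hsub ht)
  -- restricted equality
  have hre : ∀ ε : ℝ, 0 < ε → μ.restrict (Ioi ε) = ν.restrict (Ioi ε) := by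
    intro ε hε
    refine Measure.ext_of_Ioc' _ _ (fun a b hab => ?_) (fun a b hab => ?_)
    · rw [Measure.restrict_apply measurableSet_Ioc]
      exact ne_top_of_le_ne_top (hμIoi_ne ε hε)
        (measure_mono Set.inter_subset_right)
    · rw [Measure.restrict_apply measurableSet_Ioc, Measure.restrict_apply measurableSet_Ioc,
        Set.Ioc_inter_Ioi]
      rcases le_or_gt b (a ⊔ ε) with hba | hba
      · rw [Set.Ioc_eq_empty (not_lt.2 hba), measure_empty, measure_empty]
      · have haε : 0 < a ⊔ ε := lt_of_lt_of_le hε le_sup_right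
        rw [hμIoc _ b haε hba.le, hνIoc _ b haε hba.le]
  -- full equality on Ioi 0
  have hμν : μ.restrict (Ioi (0:ℝ)) = ν := by
    ext u hu
    rw [Measure.restrict_apply hu]
    have hseq : u ∩ Ioi (0:ℝ) = ⋃ n : ℕ, u ∩ Ioi ((n:ℝ) + 1)⁻¹ := by
      ext x
      simp only [mem_inter_iff, mem_iUnion, mem_Ioi]
      constructor
      · rintro ⟨hxu, hx⟩
        obtain ⟨n, hn⟩ := exists_nat_one_div_lt hx
        rw [one_div] at hn
        exact ⟨n, hxu, hn⟩
      · rintro ⟨n, hxu, hx⟩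
        exact ⟨hxu, lt_trans (by positivity) hx⟩
    have hmono : Monotone (fun n : ℕ => u ∩ Ioi ((n:ℝ) + 1)⁻¹) := by
      intro m n hmn
      apply Set.inter_subset_inter_right
      apply Set.Ioi_subset_Ioi
      have h1 : (0:ℝ) < (m:ℝ) + 1 := by positivity
      have h2 : (m:ℝ) + 1 ≤ (n:ℝ) + 1 := by exact_mod_cast by omega
      exact inv_anti₀ h1 h2
    have hstep : ∀ n : ℕ, μ (u ∩ Ioi ((n:ℝ) + 1)⁻¹) = ν (u ∩ Ioi ((n:ℝ) + 1)⁻¹) := by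
      intro n
      have hεpos : (0:ℝ) < ((n:ℝ) + 1)⁻¹ := by positivity
      have := hre _ hεpos
      calc μ (u ∩ Ioi ((n:ℝ) + 1)⁻¹) = (μ.restrict (Ioi ((n:ℝ) + 1)⁻¹)) u := by
            rw [Measure.restrict_apply hu]
        _ = (ν.restrict (Ioi ((n:ℝ) + 1)⁻¹)) u := by rw [this]
        _ = ν (u ∩ Ioi ((n:ℝ) + 1)⁻¹) := by rw [Measure.restrict_apply hu]
    have hνu : ν u = ν (u ∩ Ioi (0:ℝ)) := by
      rw [hν_apply _ hu, hν_apply _ (hu.inter measurableSet_Ioi), Set.inter_assoc,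
        Set.inter_self]
    rw [hνu, hseq, (hmono.directed_le).measure_iUnion, (hmono.directed_le).measure_iUnion]
    exact iSup_congr hstep
  -- transfer lemmas
  have hcoe : (fun t => ENNReal.ofReal (f t)) = (fun t => ((Real.toNNReal (f t) : ℝ≥0) : ℝ≥0∞)) :=
    rfl
  have hmeasf' : Measurable (fun t => Real.toNNReal (f t)) := hmeasf.real_toNNReal
  have htransEq : ∀ g : ℝ → ℝ, ∫ t in Ioi (0:ℝ), g t ∂μ = ∫ t in Ioi (0:ℝ), f t * g t := by
    intro g
    have h0 : ∫ t in Ioi (0:ℝ), g t ∂μ = ∫ t, g t ∂(μ.restrict (Ioi 0)) := rfl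
    rw [h0, hμν, hνdef, hcoe, integral_withDensity_eq_integral_smul hmeasf' g]
    refine setIntegral_congr_fun measurableSet_Ioi (fun t ht => ?_)
    simp only [NNReal.smul_def, Real.coe_toNNReal _ (hf_nonneg t ht), smul_eq_mul]
  have htransInt : ∀ g : ℝ → ℝ, IntegrableOn (fun t => g t * f t) (Ioi (0:ℝ)) volume →
      Integrable g (μ.restrict (Ioi (0:ℝ))) := by
    intro g hg
    rw [hμν, hνdef,
      integrable_withDensity_iff hmeasf.ennreal_ofReal
        (Eventually.of_forall fun _ => ENNReal.ofReal_lt_top)]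
    apply hg.congr
    filter_upwards [ae_restrict_mem measurableSet_Ioi] with t ht
    rw [ENNReal.toReal_ofReal (hf_nonneg t ht)]
  -- base integrability
  have hbase : ∀ c : ℝ, 0 < c →
      IntegrableOn (fun t : ℝ => t ^ (-β) * Real.exp (-(c * t))) (Ioi (0:ℝ)) volume := by
    intro c hc
    have hcont : ContinuousOn (fun t : ℝ => t ^ (-β) * Real.exp (-(c * t))) (Ioi (0:ℝ)) :=
      (ContinuousOn.rpow_const continuousOn_id (fun x hx => Or.inl (ne_of_gt hx))).mul
        (Continuous.continuousOn (by fun_prop))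
    have h1 : IntegrableOn (fun t : ℝ => t ^ (-β)) (Ioc (0:ℝ) 1) volume :=
      ((intervalIntegral.integrableOn_Ioo_rpow_iff one_pos).2 (by linarith)).congr_set_ae Ioo_ae_eq_Ioc.symm
    have h2 : IntegrableOn (fun t : ℝ => Real.exp (-(c * t))) (Ioi (1:ℝ)) volume := by
      simpa [neg_mul] using exp_neg_integrableOn_Ioi 1 hc
    rw [← Set.Ioc_union_Ioi_eq_Ioi (zero_le_one' ℝ)]
    refine IntegrableOn.union ?_ ?_
    · refine h1.mono'
        ((hcont.mono Set.Ioc_subset_Ioi_self).aestronglyMeasurable measurableSet_Ioc) ?_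
      filter_upwards [ae_restrict_mem measurableSet_Ioc] with t ht
      have ht0 : 0 < t := ht.1
      have he : Real.exp (-(c*t)) ≤ 1 := by
        rw [← Real.exp_zero]; exact Real.exp_le_exp.2 (by nlinarith)
      have hrp : (0:ℝ) < t ^ (-β) := Real.rpow_pos_of_pos ht0 _
      have he0 : (0:ℝ) < Real.exp (-(c*t)) := Real.exp_pos _
      rw [Real.norm_eq_abs, abs_of_nonneg (by positivity)]
      nlinarith
    · refine h2.mono'
        ((hcont.mono (Set.Ioi_subset_Ioi zero_le_one)).aestronglyMeasurable measurableSet_Ioi) ?_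
      filter_upwards [ae_restrict_mem measurableSet_Ioi] with t ht
      have ht1 : (1:ℝ) < t := ht
      have hrp : t ^ (-β) ≤ 1 := Real.rpow_le_one_of_one_le_of_nonpos ht1.le (by linarith)
      have hrp0 : (0:ℝ) ≤ t ^ (-β) := (Real.rpow_pos_of_pos (lt_trans one_pos ht1) _).le
      have he : (0:ℝ) < Real.exp (-(c*t)) := Real.exp_pos _
      rw [Real.norm_eq_abs, abs_of_nonneg (by positivity)]
      nlinarith
  -- integrability of the bound function against f
  have hintB : IntegrableOn (fun t : ℝ => (Real.exp (-(s/2 * t)) * t) * f t) (Ioi (0:ℝ))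
      volume := by
    have hb := (hbase (s/2) (by linarith)).const_mul K
    have hcont : ContinuousOn (fun t : ℝ => (Real.exp (-(s/2 * t)) * t) * f t) (Ioi (0:ℝ)) :=
      (Continuous.continuousOn (by fun_prop)).mul hcontf
    refine hb.mono' (hcont.aestronglyMeasurable measurableSet_Ioi) ?_
    filter_upwards [ae_restrict_mem measurableSet_Ioi] with t ht
    have ht0 : 0 < t := ht
    have hfk := hfK t ht0
    have hf0 := hf_nonneg t ht0
    have he : (0:ℝ) < Real.exp (-(s/2*t)) := Real.exp_pos _
    have h1 : t ^ (-β-1) * t = t ^ (-β) := hrw t ht0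
    rw [Real.norm_eq_abs, abs_of_nonneg (by positivity)]
    calc (Real.exp (-(s/2 * t)) * t) * f t
        ≤ (Real.exp (-(s/2 * t)) * t) * (K * t ^ (-β-1)) :=
          mul_le_mul_of_nonneg_left hfk (by positivity)
      _ = K * (t ^ (-β-1) * t * Real.exp (-(s/2 * t))) := by ring
      _ = K * (t ^ (-β) * Real.exp (-(s/2 * t))) := by rw [h1]
  -- integrability of (1 - exp(-xt)) against f
  have hintA : ∀ x : ℝ, 0 < x →
      IntegrableOn (fun t : ℝ => (1 - Real.exp (-(x * t))) * f t) (Ioi (0:ℝ)) volume := by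
    intro x hx
    have hcont : ContinuousOn (fun t : ℝ => (1 - Real.exp (-(x * t))) * f t) (Ioi (0:ℝ)) :=
      (Continuous.continuousOn (by fun_prop)).mul hcontf
    have h1 : IntegrableOn (fun t : ℝ => (x * K) * t ^ (-β)) (Ioc (0:ℝ) 1) volume :=
      (((intervalIntegral.integrableOn_Ioo_rpow_iff one_pos).2 (by linarith)).congr_set_ae Ioo_ae_eq_Ioc.symm).const_mul _
    have h2 : IntegrableOn (fun t : ℝ => K * t ^ (-β-1)) (Ioi (1:ℝ)) volume :=
      (integrableOn_Ioi_rpow_of_lt (by linarith) one_pos).const_mul K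
    rw [← Set.Ioc_union_Ioi_eq_Ioi (zero_le_one' ℝ)]
    refine IntegrableOn.union ?_ ?_
    · refine h1.mono'
        ((hcont.mono Set.Ioc_subset_Ioi_self).aestronglyMeasurable measurableSet_Ioc) ?_
      filter_upwards [ae_restrict_mem measurableSet_Ioc] with t ht
      have ht0 : 0 < t := ht.1
      have hfk := hfK t ht0
      have hf0 := hf_nonneg t ht0
      have h3 : Real.exp (-(x*t)) ≤ 1 := by
        rw [← Real.exp_zero]; exact Real.exp_le_exp.2 (by nlinarith)
      have h4 : 1 - Real.exp (-(x*t)) ≤ x * t := by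
        have := Real.add_one_le_exp (-(x*t)); linarith
      have h5 : t ^ (-β-1) * t = t ^ (-β) := hrw t ht0
      have h6 : (0:ℝ) ≤ t ^ (-β-1) := (Real.rpow_pos_of_pos ht0 _).le
      rw [Real.norm_eq_abs, abs_of_nonneg (by nlinarith)]
      calc (1 - Real.exp (-(x * t))) * f t ≤ (x * t) * (K * t ^ (-β-1)) :=
            mul_le_mul h4 hfk hf0 (by positivity)
        _ = (x * K) * (t ^ (-β-1) * t) := by ring
        _ = (x * K) * t ^ (-β) := by rw [h5]
    · refine h2.mono'
        ((hcont.mono (Set.Ioi_subset_Ioi zero_le_one)).aestronglyMeasurable measurableSet_Ioi) ?_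
      filter_upwards [ae_restrict_mem measurableSet_Ioi] with t ht
      have ht1 : (1:ℝ) < t := ht
      have ht0 : (0:ℝ) < t := lt_trans one_pos ht1
      have hfk := hfK t ht0
      have hf0 := hf_nonneg t ht0
      have h3 : Real.exp (-(x*t)) ≤ 1 := by
        rw [← Real.exp_zero]; exact Real.exp_le_exp.2 (by nlinarith)
      have he0 : (0:ℝ) < Real.exp (-(x*t)) := Real.exp_pos _
      rw [Real.norm_eq_abs, abs_of_nonneg (by nlinarith)]
      calc (1 - Real.exp (-(x * t))) * f t ≤ 1 * (K * t ^ (-β-1)) :=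
            mul_le_mul (by linarith) hfk hf0 zero_le_one
        _ = K * t ^ (-β-1) := by ring
  -- differentiation under the integral sign
  have hFmeas : ∀ᶠ x in 𝓝 s,
      AEStronglyMeasurable (fun t : ℝ => 1 - Real.exp (-(x * t))) (μ.restrict (Ioi 0)) :=
    Eventually.of_forall fun x => (Continuous.aestronglyMeasurable (by fun_prop))
  have hFint : Integrable (fun t : ℝ => 1 - Real.exp (-(s * t))) (μ.restrict (Ioi 0)) :=
    htransInt _ (hintA s hs)
  have hF'meas : AEStronglyMeasurable (fun t : ℝ => Real.exp (-(s * t)) * t)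
      (μ.restrict (Ioi 0)) := Continuous.aestronglyMeasurable (by fun_prop)
  have hboundint : Integrable (fun t : ℝ => Real.exp (-(s/2 * t)) * t) (μ.restrict (Ioi 0)) :=
    htransInt _ hintB
  have hbound : ∀ᵐ t ∂(μ.restrict (Ioi (0:ℝ))), ∀ x ∈ Metric.ball s (s/2),
      ‖Real.exp (-(x * t)) * t‖ ≤ Real.exp (-(s/2 * t)) * t := by
    filter_upwards [ae_restrict_mem measurableSet_Ioi] with t ht x hx
    have ht0 : 0 < t := ht
    have hx2 : s/2 < x := by
      have := abs_lt.1 (by simpa [Real.dist_eq] using Metric.mem_ball.1 hx)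
      linarith [this.1]
    rw [Real.norm_eq_abs, abs_of_nonneg (by positivity)]
    have hee : Real.exp (-(x*t)) ≤ Real.exp (-(s/2*t)) := Real.exp_le_exp.2 (by nlinarith)
    nlinarith [Real.exp_pos (-(s/2*t))]
  have hdiff : ∀ᵐ t ∂(μ.restrict (Ioi (0:ℝ))), ∀ x ∈ Metric.ball s (s/2),
      HasDerivAt (fun x : ℝ => 1 - Real.exp (-(x * t))) (Real.exp (-(x * t)) * t) x := by
    refine Eventually.of_forall fun t x hx => ?_
    have h1 : HasDerivAt (fun x : ℝ => -(x * t)) (-t) x := (hasDerivAt_mul_const t).neg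
    have h3 := (h1.exp).const_sub 1
    simpa [mul_neg, neg_neg] using h3
  obtain ⟨-, hmain⟩ := hasDerivAt_integral_of_dominated_loc_of_deriv_le
    (Metric.ball_mem_nhds s (show (0:ℝ) < s/2 by linarith)) hFmeas hFint hF'meas hbound hboundint hdiff
  refine ⟨hmain, ?_⟩
  rw [htransEq (fun t => Real.exp (-(s*t)) * t)]
  refine setIntegral_congr_fun measurableSet_Ioi (fun t ht => ?_)
  have ht0 : (0:ℝ) < t := ht
  have h5 := hrw t ht0
  simp only [hfdef, hhdef]
  rw [← h5]
  ring

end Stmt16Aux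

/-- for a continuously differentiable admissable `τ` w.r.t. `1/α` and `d`,
with `ξ(s) = ∫₀^∞ (1 − e^(−st)) dμ(t)` and `μ((t,∞)) = t^(−1/α) τ(log t)`, one has
`ξ'(s) = ∫₀^∞ e^(−st) t dμ(t) = ∫₀^∞ e^(−st) t^(−1/α)((1/α)τ(log t) − τ'(log t)) dt`. -/
theorem stmt16 (α d : ℝ) (hα : α ∈ Set.Ioo (1:ℝ) 2) (hd : 1 < d)
    (τ : ℝ → ℝ) (hτC1 : ContDiff ℝ 1 τ) (hτ : IsAdmissable τ (1/α) d)
    (μ : MeasureTheory.Measure ℝ) (hμ : IsTailMeasure μ (1/α) τ)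
    (ξ : ℝ → ℝ)
    (hξ : ξ = fun s : ℝ => ∫ t in Set.Ioi (0:ℝ), (1 - Real.exp (-(s * t))) ∂μ) :
    ∀ s > (0:ℝ),
      deriv ξ s = (∫ t in Set.Ioi (0:ℝ), Real.exp (-(s * t)) * t ∂μ) ∧
      deriv ξ s = ∫ t in Set.Ioi (0:ℝ),
        Real.exp (-(s * t)) *
          (t ^ (-(1/α)) * ((1/α) * τ (Real.log t) - deriv τ (Real.log t))) := by
  intro s hs
  obtain ⟨hα1, hα2⟩ := hα
  obtain ⟨hpos, hanti, hper⟩ := hτ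
  obtain ⟨hμ0, hμt⟩ := hμ
  have hβ0 : 0 < 1/α := by positivity
  have hβ1 : 1/α < 1 := by rw [div_lt_one (by linarith)]; linarith
  have hp : 0 < Real.log (d ^ (1/(1/α))) := by
    rw [Real.log_rpow (by linarith : (0:ℝ) < d), one_div_one_div]
    have := Real.log_pos hd
    positivity
  have hmain := Stmt16Aux.main (1/α) (Real.log (d ^ (1/(1/α)))) hβ0 hβ1 hp τ hτC1 hpos
    hanti hper μ hμt s hs
  have hderiv : deriv ξ s = ∫ t in Set.Ioi (0:ℝ), Real.exp (-(s * t)) * t ∂μ := by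
    rw [hξ]
    exact hmain.1.deriv
  exact ⟨hderiv, hderiv.trans hmain.2⟩
end
end

section
/- Let A, B ⊆ ℝ be open, let n ≥ 2, and let f : A → B be an invertible C^n function with f′(x) ≠ 0 for all x ∈ A. Then f^{−1} : B → A is of class C^n and for every x ∈ B, (f^{−1})^{(n)}(x) = −(1/f′(f^{−1}(x))) · ∑ over all tuples of non-negative integers (k₁, …, k_{n−1}) with k₁ + 2k₂ + ⋯ + (n−1)k_{n−1} = n of [ n!/(k₁! ⋯ k_{n−1}!) · f^{(k₁+⋯+k_{n−1})}(f^{−1}(x)) · ∏_{j=1}^{n−1} ( (f^{−1})^{(j)}(x) / j! )^{k_j} ]. -/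
open MeasureTheory Set Filter Real

noncomputable section

namespace Stmt19Aux

noncomputable def typeOf {n : ℕ} (c : OrderedFinpartition n) : ℕ → ℕ :=
  fun j => (Finset.univ.filter (fun i => c.partSize i = j)).card

lemma typeOf_card {n : ℕ} (c : OrderedFinpartition n) (j : ℕ) :
    typeOf c j = ∑ i : Fin c.length, if c.partSize i = j then 1 else 0 := by
  rw [typeOf, Finset.card_filter]

lemma sum_partSize {n : ℕ} (c : OrderedFinpartition n) : ∑ i, c.partSize i = n := by
  have h := Fintype.card_congr c.equivSigma
  simpa [Fintype.card_sigma] using h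

lemma fiber_sum {n : ℕ} (c : OrderedFinpartition n) {M : Type*} [AddCommMonoid M] (e : ℕ → M) :
    ∑ i, e (c.partSize i) = ∑ j ∈ Finset.range (n+1), (typeOf c j) • e j := by
  rw [← Finset.sum_fiberwise_of_maps_to (g := fun i => c.partSize i)
    (t := Finset.range (n+1)) (fun i _ => Finset.mem_range.2 (Nat.lt_succ_of_le (c.partSize_le i)))]
  refine Finset.sum_congr rfl fun j _ => ?_
  rw [show (typeOf c j) = (Finset.univ.filter (fun i => c.partSize i = j)).card from rfl,
    ← Finset.sum_const]
  refine Finset.sum_congr rfl fun i hi => ?_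
  rw [(Finset.mem_filter.1 hi).2]

lemma fiber_prod {n : ℕ} (c : OrderedFinpartition n) {M : Type*} [CommMonoid M] (e : ℕ → M) :
    ∏ i, e (c.partSize i) = ∏ j ∈ Finset.range (n+1), e j ^ (typeOf c j) := by
  rw [← Finset.prod_fiberwise_of_maps_to (g := fun i => c.partSize i)
    (t := Finset.range (n+1)) (fun i _ => Finset.mem_range.2 (Nat.lt_succ_of_le (c.partSize_le i)))]
  refine Finset.prod_congr rfl fun j _ => ?_
  rw [show (typeOf c j) = (Finset.univ.filter (fun i => c.partSize i = j)).card from rfl,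
    ← Finset.prod_const]
  refine Finset.prod_congr rfl fun i hi => ?_
  rw [(Finset.mem_filter.1 hi).2]

lemma typeOf_support {n : ℕ} (c : OrderedFinpartition n) {j : ℕ} (h : typeOf c j ≠ 0) :
    1 ≤ j ∧ j ≤ n := by
  rw [typeOf] at h
  obtain ⟨i, hi⟩ := Finset.card_pos.1 (Nat.pos_of_ne_zero h)
  have := (Finset.mem_filter.1 hi).2
  exact this ▸ ⟨c.partSize_pos i, c.partSize_le i⟩

lemma length_eq_sum_typeOf {n : ℕ} (c : OrderedFinpartition n) :
    c.length = ∑ j ∈ Finset.range (n+1), typeOf c j := by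
  have := fiber_sum c (fun _ => (1 : ℕ))
  simpa using this

lemma sum_mul_typeOf {n : ℕ} (c : OrderedFinpartition n) :
    ∑ j ∈ Finset.range (n+1), j * typeOf c j = n := by
  have h := fiber_sum c (fun j => j)
  rw [sum_partSize] at h
  exact (Finset.sum_congr rfl fun j _ => by rw [smul_eq_mul, mul_comm]).trans h.symm

/-- Valid type vectors. -/
def Valid (n : ℕ) (k : ℕ → ℕ) : Prop :=
  (∀ j, k j ≠ 0 → 1 ≤ j ∧ j ≤ n) ∧ ∑ j ∈ Finset.range (n+1), j * k j = n

lemma valid_typeOf {n : ℕ} (c : OrderedFinpartition n) : Valid n (typeOf c) :=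
  ⟨fun _ h => typeOf_support c h, sum_mul_typeOf c⟩

lemma typeOf_extendLeft {n : ℕ} (c : OrderedFinpartition n) :
    typeOf (c.extendLeft) = fun j => typeOf c j + (if j = 1 then 1 else 0) := by
  funext j
  rw [typeOf_card, typeOf_card]
  show (∑ i : Fin (c.length + 1), if (Fin.cons 1 c.partSize : Fin (c.length+1) → ℕ) i = j
    then 1 else 0) = _
  rw [Fin.sum_univ_succ]
  simp only [Fin.cons_zero, Fin.cons_succ]
  rw [add_comm]
  congr 1
  by_cases h : j = 1 <;> simp [h, eq_comm]

/-- bump a type vector: move one part from size `s` to size `s+1`. -/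
def bump (t : ℕ → ℕ) (s : ℕ) : ℕ → ℕ :=
  fun j => if j = s then t j - 1 else if j = s + 1 then t j + 1 else t j

lemma typeOf_extendMiddle {n : ℕ} (c : OrderedFinpartition n) (i : Fin c.length) :
    typeOf (c.extendMiddle i) = bump (typeOf c) (c.partSize i) := by
  funext j
  have hL : (∑ i' : Fin c.length,
        if Function.update c.partSize i (c.partSize i + 1) i' = j then 1 else 0)
      = (∑ i' ∈ Finset.univ.erase i, if c.partSize i' = j then 1 else 0)
        + (if c.partSize i + 1 = j then 1 else 0) := by
    rw [← Finset.sum_erase_add _ _ (Finset.mem_univ i), Function.update_self]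
    congr 1
    exact Finset.sum_congr rfl fun i' hi' =>
      by rw [Function.update_of_ne (Finset.ne_of_mem_erase hi')]
  have hR : (∑ i' : Fin c.length, if c.partSize i' = j then 1 else 0)
      = (∑ i' ∈ Finset.univ.erase i, if c.partSize i' = j then 1 else 0)
        + (if c.partSize i = j then 1 else 0) :=
    (Finset.sum_erase_add _ _ (Finset.mem_univ i)).symm
  rw [typeOf_card]
  show (∑ i' : Fin c.length,
      if Function.update c.partSize i (c.partSize i + 1) i' = j then 1 else 0) = _
  simp only [bump, typeOf_card, hL, hR]
  split_ifs <;> omega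


open Classical in
noncomputable def fib (n : ℕ) (k : ℕ → ℕ) : Finset (OrderedFinpartition n) :=
  Finset.univ.filter (fun c => typeOf c = k)

def Dfac (n : ℕ) (k : ℕ → ℕ) : ℕ :=
  ∏ j ∈ Finset.range (n+1), (Nat.factorial j ^ k j * Nat.factorial (k j))

lemma Dfac_top_zero {n : ℕ} {k : ℕ → ℕ} (h : k (n+1) = 0) : Dfac (n+1) k = Dfac n k := by
  rw [Dfac, Finset.prod_range_succ, h]
  simp [Dfac]

lemma valid_top {n : ℕ} {k : ℕ → ℕ} (h : Valid n k) (htop : k n ≠ 0) (hn : 0 < n) :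
    ∀ j, k j = if j = n then 1 else 0 := by
  obtain ⟨hsupp, hsum⟩ := h
  have hmem : n ∈ Finset.range (n+1) := Finset.self_mem_range_succ n
  have hle : n * k n ≤ n := by
    calc n * k n ≤ ∑ j ∈ Finset.range (n+1), j * k j :=
          Finset.single_le_sum (f := fun j => j * k j) (fun j _ => Nat.zero_le _) hmem
      _ = n := hsum
  have hkn : k n = 1 := by
    rcases Nat.lt_or_ge (k n) 2 with h2 | h2
    · omega
    · exfalso
      have h3 : n * 2 ≤ n * k n := Nat.mul_le_mul_left n h2
      omega
  have h3 : n * k n + ∑ j ∈ (Finset.range (n+1)).erase n, j * k j = n := by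
    have h4 := Finset.add_sum_erase _ (fun j => j * k j) hmem
    rw [hsum] at h4
    exact h4
  rw [hkn, mul_one] at h3
  have hrest : ∑ j ∈ (Finset.range (n+1)).erase n, j * k j = 0 := by omega
  intro j
  by_cases hj : j = n
  · simp [hj, hkn]
  · simp only [hj, if_false]
    by_contra hkj
    have h2 := hsupp j hkj
    rcases Nat.lt_or_ge j n with hlt | hge
    · have hjm : j ∈ (Finset.range (n+1)).erase n :=
        Finset.mem_erase.2 ⟨hj, Finset.mem_range.2 (by omega)⟩
      have h4 := (Finset.sum_eq_zero_iff.1 hrest) j hjm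
      have h5 : j * k j ≠ 0 := Nat.mul_ne_zero (by omega) hkj
      omega
    · omega

/-- decrement a type vector at 1. -/
def dec1 (k : ℕ → ℕ) : ℕ → ℕ := fun j => k j - if j = 1 then 1 else 0

/-- inverse of `bump`. -/
def unbump (k : ℕ → ℕ) (s : ℕ) : ℕ → ℕ :=
  fun j => if j = s then k j + 1 else if j = s + 1 then k j - 1 else k j

lemma addOne_eq_iff {t k : ℕ → ℕ} (hk : k 1 ≠ 0) :
    ((fun j => t j + if j = 1 then 1 else 0) = k) ↔ t = dec1 k := by
  have main : ∀ j, ((t j + if j = 1 then 1 else 0) = k j ↔ t j = dec1 k j) := fun j => by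
    by_cases e : j = 1 <;> simp only [dec1, e, if_true, if_false] <;> omega
  constructor
  · intro h; funext j; exact (main j).1 (congrFun h j)
  · intro h; funext j; exact (main j).2 (congrFun h j)

lemma bump_eq_iff {t k : ℕ → ℕ} {s : ℕ} (hk : k (s+1) ≠ 0) (ht : t s ≠ 0) :
    bump t s = k ↔ t = unbump k s := by
  have hne : s + 1 ≠ s := by omega
  constructor
  · intro h
    funext j
    have h3 := congrFun h j
    simp only [bump] at h3
    simp only [unbump]
    by_cases e1 : j = s
    · subst e1
      rw [if_pos rfl] at h3
      rw [if_pos rfl]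
      omega
    · by_cases e2 : j = s + 1
      · subst e2
        rw [if_neg hne, if_pos rfl] at h3
        rw [if_neg hne, if_pos rfl]
        omega
      · rw [if_neg e1, if_neg e2] at h3
        rw [if_neg e1, if_neg e2]
        exact h3
  · intro h
    funext j
    have h3 := congrFun h j
    simp only [unbump] at h3
    simp only [bump]
    by_cases e1 : j = s
    · subst e1
      rw [if_pos rfl] at h3
      rw [if_pos rfl]
      omega
    · by_cases e2 : j = s + 1
      · subst e2
        rw [if_neg hne, if_pos rfl] at h3
        rw [if_neg hne, if_pos rfl]
        omega
      · rw [if_neg e1, if_neg e2] at h3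
        rw [if_neg e1, if_neg e2]
        exact h3

lemma valid_dec1 {n : ℕ} {k : ℕ → ℕ} (h : Valid (n+1) k) (h1 : k 1 ≠ 0) :
    Valid n (dec1 k) ∧ dec1 k (n+1) = 0 := by
  obtain ⟨hsupp, hsum⟩ := h
  have hsum' : ∑ j ∈ Finset.range (n+2), j * k j = n + 1 := hsum
  have htop : dec1 k (n+1) = 0 := by
    rcases Nat.eq_zero_or_pos n with rfl | hn
    · have h2 := valid_top ⟨hsupp, hsum⟩ h1 Nat.one_pos 1
      rw [if_pos rfl] at h2
      show dec1 k 1 = 0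
      simp only [dec1, if_true]
      omega
    · by_cases hk : k (n+1) = 0
      · simp [dec1, hk]
      · have h2 := valid_top ⟨hsupp, hsum⟩ hk (by omega) 1
        rw [if_neg (by omega : (1:ℕ) ≠ n+1)] at h2
        exact absurd h2 h1
  have hks : k = fun j => dec1 k j + if j = 1 then 1 else 0 := by
    funext j
    by_cases e : j = 1 <;> simp only [dec1, e, if_true, if_false] <;> omega
  have hone : (∑ j ∈ Finset.range (n+2), j * if j = 1 then 1 else 0) = 1 := by
    rw [Finset.sum_congr rfl (fun j (_ : j ∈ Finset.range (n+2)) =>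
      (by split_ifs with hj <;> simp [hj] :
        (j * if j = 1 then 1 else 0) = if j = 1 then 1 else 0))]
    rw [Finset.sum_ite_eq' (Finset.range (n+2)) 1 (fun _ => 1)]
    rw [if_pos (Finset.mem_range.2 (by omega))]
  have hsum2 : ∑ j ∈ Finset.range (n+2), j * dec1 k j = n := by
    have hsplit : ∑ j ∈ Finset.range (n+2), j * k j
        = (∑ j ∈ Finset.range (n+2), j * dec1 k j)
          + ∑ j ∈ Finset.range (n+2), (j * if j = 1 then 1 else 0) := by
      rw [← Finset.sum_add_distrib]
      refine Finset.sum_congr rfl fun j _ => ?_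
      conv_lhs => rw [hks]
      ring
    omega
  have h5 : ∑ j ∈ Finset.range (n+2), j * dec1 k j
      = (∑ j ∈ Finset.range (n+1), j * dec1 k j) + (n+1) * dec1 k (n+1) :=
    Finset.sum_range_succ _ (n+1)
  rw [htop, mul_zero, add_zero] at h5
  refine ⟨⟨?_, by omega⟩, htop⟩
  intro j hj
  have hkj : k j ≠ 0 := by simp only [dec1] at hj; split_ifs at hj <;> omega
  have h2 := hsupp j hkj
  refine ⟨h2.1, ?_⟩
  rcases Nat.lt_or_ge j (n+1) with hlt | hge
  · omega
  · have hj1 : j = n + 1 := by omega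
    rw [hj1] at hj
    exact absurd htop hj

lemma sum_split_two {M : Type*} [AddCommMonoid M] {t : Finset ℕ} {s s' : ℕ}
    (hs : s ∈ t) (hs' : s' ∈ t) (hne : s ≠ s') (f : ℕ → M) :
    ∑ j ∈ t, f j = f s + f s' + ∑ j ∈ (t.erase s).erase s', f j := by
  rw [← Finset.add_sum_erase t f hs,
    ← Finset.add_sum_erase _ f (Finset.mem_erase.2 ⟨hne.symm, hs'⟩), ← add_assoc]

lemma prod_split_two {M : Type*} [CommMonoid M] {t : Finset ℕ} {s s' : ℕ}
    (hs : s ∈ t) (hs' : s' ∈ t) (hne : s ≠ s') (f : ℕ → M) :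
    ∏ j ∈ t, f j = f s * f s' * ∏ j ∈ (t.erase s).erase s', f j := by
  rw [← Finset.mul_prod_erase t f hs,
    ← Finset.mul_prod_erase _ f (Finset.mem_erase.2 ⟨hne.symm, hs'⟩), ← mul_assoc]

lemma valid_unbump {n : ℕ} {k : ℕ → ℕ} {s : ℕ} (hs1 : 1 ≤ s) (hs2 : s ≤ n)
    (h : Valid (n+1) k) (hk : k (s+1) ≠ 0) :
    Valid n (unbump k s) ∧ unbump k s (n+1) = 0 := by
  obtain ⟨hsupp, hsum⟩ := h
  have hsum' : ∑ j ∈ Finset.range (n+2), j * k j = n + 1 := hsum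
  have hkd : k (n+1) ≠ 0 → ∀ j, k j = if j = n+1 then 1 else 0 :=
    fun hd => valid_top ⟨hsupp, hsum⟩ hd (by omega)
  have hu2 : unbump k s (s+1) = k (s+1) - 1 := by
    simp only [unbump]
    rw [if_neg (show s+1 ≠ s by omega)]
    simp
  have htop : unbump k s (n+1) = 0 := by
    by_cases he : s + 1 = n + 1
    · have hd := hkd (by rw [he] at hk; exact hk) (s+1)
      rw [if_pos he] at hd
      rw [← he, hu2]
      omega
    · by_cases hd : k (n+1) = 0
      · simp only [unbump, if_neg (show n+1 ≠ s by omega), if_neg (show n+1 ≠ s+1 from he ∘ Eq.symm)]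
        exact hd
      · have h2 := hkd hd (s+1)
        rw [if_neg he] at h2
        exact absurd h2 hk
  have hk1 : 1 ≤ k (s+1) := Nat.one_le_iff_ne_zero.2 hk
  have hsm : s ∈ Finset.range (n+2) := Finset.mem_range.2 (by omega)
  have hsm' : s + 1 ∈ Finset.range (n+2) := Finset.mem_range.2 (by omega)
  have hnes : s ≠ s + 1 := by omega
  have hsum2 : ∑ j ∈ Finset.range (n+2), j * unbump k s j = n := by
    have e1 := sum_split_two hsm hsm' hnes (fun j => j * unbump k s j)
    have e2 := sum_split_two hsm hsm' hnes (fun j => j * k j)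
    have erest : ∑ j ∈ ((Finset.range (n+2)).erase s).erase (s+1), j * unbump k s j
        = ∑ j ∈ ((Finset.range (n+2)).erase s).erase (s+1), j * k j := by
      refine Finset.sum_congr rfl fun j hj => ?_
      have h1 := Finset.ne_of_mem_erase hj
      have h2 := Finset.ne_of_mem_erase (Finset.mem_of_mem_erase hj)
      simp [unbump, h1, h2]
    have hu1 : unbump k s s = k s + 1 := by simp [unbump]
    have key : (∑ j ∈ Finset.range (n+2), j * unbump k s j) + (s+1)
        = (∑ j ∈ Finset.range (n+2), j * k j) + s := by
      rw [e1, e2, erest, hu1, hu2]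
      obtain ⟨t, ht⟩ := Nat.exists_eq_add_of_le hk1
      rw [ht, Nat.add_sub_cancel_left]
      ring
    rw [hsum'] at key
    omega
  have h5 : ∑ j ∈ Finset.range (n+2), j * unbump k s j
      = (∑ j ∈ Finset.range (n+1), j * unbump k s j) + (n+1) * unbump k s (n+1) :=
    Finset.sum_range_succ _ (n+1)
  rw [htop, mul_zero, add_zero] at h5
  refine ⟨⟨?_, by omega⟩, htop⟩
  intro j hj
  by_cases e1 : j = s
  · omega
  · by_cases e2 : j = s + 1
    · subst e2
      refine ⟨by omega, ?_⟩
      by_contra hgt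
      have he : s + 1 = n + 1 := by
        have := (hsupp (s+1) hk).2
        omega
      rw [he] at hj
      exact hj htop
    · simp only [unbump, if_neg e1, if_neg e2] at hj
      have h3 := hsupp j hj
      refine ⟨h3.1, ?_⟩
      rcases Nat.lt_or_ge j (n+1) with hlt | hge
      · omega
      · have hj1 : j = n+1 := by omega
        have h4 := hkd (hj1 ▸ hj) (s+1)
        rw [if_neg (by omega)] at h4
        exact absurd h4 hk


lemma Dfac_dec1 {n : ℕ} {k : ℕ → ℕ} (h1 : k 1 ≠ 0) :
    Dfac (n+1) k = k 1 * Dfac (n+1) (dec1 k) := by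
  have hm : (1:ℕ) ∈ Finset.range (n+2) := Finset.mem_range.2 (by omega)
  rw [Dfac, Dfac, ← Finset.mul_prod_erase _ _ hm, ← Finset.mul_prod_erase _ _ hm]
  have herase : ∏ j ∈ (Finset.range (n+2)).erase 1,
      (Nat.factorial j ^ dec1 k j * Nat.factorial (dec1 k j))
      = ∏ j ∈ (Finset.range (n+2)).erase 1, (Nat.factorial j ^ k j * Nat.factorial (k j)) := by
    refine Finset.prod_congr rfl fun j hj => ?_
    have hne := Finset.ne_of_mem_erase hj
    simp [dec1, hne]
  rw [herase]
  have hd1 : dec1 k 1 = k 1 - 1 := by simp [dec1]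
  obtain ⟨m, hm1⟩ := Nat.exists_eq_add_of_le (Nat.one_le_iff_ne_zero.2 h1)
  rw [hd1, hm1]
  simp [Nat.factorial_succ, Nat.add_sub_cancel_left, Nat.factorial_one]
  rw [show 1 + m = m + 1 from by omega, Nat.factorial_succ]
  ring

lemma Dfac_unbump {n : ℕ} {k : ℕ → ℕ} {s : ℕ} (hs1 : 1 ≤ s) (hs2 : s ≤ n)
    (hk : k (s+1) ≠ 0) :
    (k s + 1) * Dfac (n+1) k = (s+1) * k (s+1) * Dfac (n+1) (unbump k s) := by
  have hsm : s ∈ Finset.range (n+2) := Finset.mem_range.2 (by omega)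
  have hsm' : s + 1 ∈ Finset.range (n+2) := Finset.mem_range.2 (by omega)
  have hnes : s ≠ s + 1 := by omega
  rw [Dfac, Dfac, prod_split_two hsm hsm' hnes, prod_split_two hsm hsm' hnes]
  have herase : ∏ j ∈ ((Finset.range (n+2)).erase s).erase (s+1),
      (Nat.factorial j ^ unbump k s j * Nat.factorial (unbump k s j))
      = ∏ j ∈ ((Finset.range (n+2)).erase s).erase (s+1),
        (Nat.factorial j ^ k j * Nat.factorial (k j)) := by
    refine Finset.prod_congr rfl fun j hj => ?_
    have h1 := Finset.ne_of_mem_erase hj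
    have h2 := Finset.ne_of_mem_erase (Finset.mem_of_mem_erase hj)
    simp [unbump, h1, h2]
  rw [herase]
  have hu1 : unbump k s s = k s + 1 := by simp [unbump]
  have hu2 : unbump k s (s+1) = k (s+1) - 1 := by
    simp only [unbump]
    rw [if_neg (show s+1 ≠ s by omega)]
    simp
  rw [hu1, hu2]
  obtain ⟨t, ht⟩ := Nat.exists_eq_add_of_le (Nat.one_le_iff_ne_zero.2 hk)
  rw [ht, Nat.add_sub_cancel_left, show 1 + t = t + 1 from by omega]
  simp only [Nat.factorial_succ, pow_succ]
  ring

open Classical in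
theorem card_fib_mul : ∀ (n : ℕ) (k : ℕ → ℕ), Valid n k →
    (fib n k).card * Dfac n k = n.factorial := by
  intro n
  induction n with
  | zero =>
    intro k hv
    have hk0 : ∀ j, k j = 0 := fun j => by
      by_contra h
      have := hv.1 j h
      omega
    have hfib : fib 0 k = Finset.univ := by
      rw [fib, Finset.filter_true_of_mem]
      intro c _
      funext j
      have h0 : typeOf c j = 0 := by
        by_contra h
        have := typeOf_support c h
        omega
      rw [h0, hk0]
    rw [hfib, Finset.card_univ, Fintype.card_unique]
    simp [Dfac, hk0]
  | succ n ih =>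
    intro k hv
    have hsum' : ∑ j ∈ Finset.range (n+2), j * k j = n + 1 := hv.2
    have hcard : (fib (n+1) k).card
        = ∑ c : OrderedFinpartition n, ((if typeOf c.extendLeft = k then 1 else 0)
            + ∑ i : Fin c.length, if typeOf (c.extendMiddle i) = k then 1 else 0) := by
      rw [fib, Finset.card_filter,
        ← Equiv.sum_comp (OrderedFinpartition.extendEquiv n)
          (fun c' => if typeOf c' = k then (1:ℕ) else 0),
        ← Finset.univ_sigma_univ, Finset.sum_sigma]
      refine Finset.sum_congr rfl fun c _ => ?_
      rw [Fintype.sum_option (fun o => if typeOf ((OrderedFinpartition.extendEquiv n) ⟨c, o⟩) = k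
        then (1:ℕ) else 0)]
      rfl
    have hmid : ∀ c : OrderedFinpartition n,
        (∑ i : Fin c.length, if typeOf (c.extendMiddle i) = k then (1:ℕ) else 0)
          = ∑ s ∈ Finset.range (n+1), typeOf c s *
              (if bump (typeOf c) s = k then 1 else 0) := by
      intro c
      rw [Finset.sum_congr rfl (fun i (_ : i ∈ Finset.univ) => by
        rw [typeOf_extendMiddle] :
          ∀ i ∈ Finset.univ, (if typeOf (c.extendMiddle i) = k then (1:ℕ) else 0)
            = (fun s => if bump (typeOf c) s = k then (1:ℕ) else 0) (c.partSize i))]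
      rw [fiber_sum c (fun s => if bump (typeOf c) s = k then (1:ℕ) else 0)]
      simp [smul_eq_mul]
    have hleft : (∑ c : OrderedFinpartition n, if typeOf c.extendLeft = k then (1:ℕ) else 0)
        * Dfac (n+1) k = n.factorial * k 1 := by
      by_cases h1 : k 1 = 0
      · have hz : ∀ c : OrderedFinpartition n,
            (if typeOf c.extendLeft = k then (1:ℕ) else 0) = 0 := by
          intro c
          rw [if_neg]
          intro hEq
          have h2 := congrFun hEq 1
          rw [typeOf_extendLeft] at hEq
          have h3 := congrFun hEq 1
          simp only [if_pos rfl] at h3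
          simp at h3
          omega
        simp [hz, h1]
      · have hiff : ∀ c : OrderedFinpartition n,
            (typeOf c.extendLeft = k) ↔ (typeOf c = dec1 k) := fun c => by
          rw [typeOf_extendLeft]; exact addOne_eq_iff h1
        have hre : (∑ c : OrderedFinpartition n, if typeOf c.extendLeft = k then (1:ℕ) else 0)
            = (fib n (dec1 k)).card := by
          rw [fib, Finset.card_filter]
          exact Finset.sum_congr rfl fun c _ => if_congr (hiff c) rfl rfl
        obtain ⟨hvd, htop⟩ := valid_dec1 hv h1
        rw [hre, Dfac_dec1 h1, Dfac_top_zero htop]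
        calc (fib n (dec1 k)).card * (k 1 * Dfac n (dec1 k))
            = ((fib n (dec1 k)).card * Dfac n (dec1 k)) * k 1 := by ring
          _ = n.factorial * k 1 := by rw [ih _ hvd]
    have hmids : ∀ s, 1 ≤ s → s ≤ n →
        (∑ c : OrderedFinpartition n,
          typeOf c s * (if bump (typeOf c) s = k then (1:ℕ) else 0))
          * Dfac (n+1) k = n.factorial * ((s+1) * k (s+1)) := by
      intro s hs1 hs2
      by_cases hks : k (s+1) = 0
      · have hz : ∀ c : OrderedFinpartition n,
            typeOf c s * (if bump (typeOf c) s = k then (1:ℕ) else 0) = 0 := by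
          intro c
          rw [if_neg, mul_zero]
          intro hEq
          have h2 := congrFun hEq (s+1)
          simp only [bump, if_neg (show s+1 ≠ s by omega), if_pos rfl] at h2
          simp [show s+1 ≠ s from by omega] at h2
          omega
        simp [hz, hks]
      · have hco : ∀ c : OrderedFinpartition n,
            typeOf c s * (if bump (typeOf c) s = k then (1:ℕ) else 0)
            = (k s + 1) * (if typeOf c = unbump k s then 1 else 0) := by
          intro c
          by_cases ht : typeOf c s = 0
          · rw [ht, zero_mul, if_neg, mul_zero]
            intro hEq
            have h2 := congrFun hEq s
            rw [ht] at h2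
            simp [unbump] at h2
          · rw [if_congr (bump_eq_iff hks ht) rfl rfl]
            by_cases he : typeOf c = unbump k s
            · rw [if_pos he, mul_one, mul_one]
              have h2 := congrFun he s
              simpa [unbump] using h2
            · rw [if_neg he, mul_zero, mul_zero]
        rw [Finset.sum_congr rfl (fun c _ => hco c), ← Finset.mul_sum]
        have hre : (∑ c : OrderedFinpartition n, if typeOf c = unbump k s then (1:ℕ) else 0)
            = (fib n (unbump k s)).card := by rw [fib, Finset.card_filter]
        rw [hre]
        obtain ⟨hvu, htopu⟩ := valid_unbump hs1 hs2 hv hks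
        have hD := Dfac_unbump (n := n) hs1 hs2 hks
        calc (k s + 1) * (fib n (unbump k s)).card * Dfac (n+1) k
            = (fib n (unbump k s)).card * ((k s + 1) * Dfac (n+1) k) := by ring
          _ = (fib n (unbump k s)).card * ((s+1) * k (s+1) * Dfac (n+1) (unbump k s)) := by
              rw [hD]
          _ = (fib n (unbump k s)).card * ((s+1) * k (s+1) * Dfac n (unbump k s)) := by
              rw [Dfac_top_zero htopu]
          _ = ((fib n (unbump k s)).card * Dfac n (unbump k s)) * ((s+1) * k (s+1)) := by ring
          _ = n.factorial * ((s+1) * k (s+1)) := by rw [ih _ hvu]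
    -- assemble
    have hM0 : (∑ c : OrderedFinpartition n,
        typeOf c 0 * (if bump (typeOf c) 0 = k then (1:ℕ) else 0)) = 0 := by
      refine Finset.sum_eq_zero fun c _ => ?_
      have h0 : typeOf c 0 = 0 := by
        by_contra h
        have := typeOf_support c h
        omega
      rw [h0, zero_mul]
    have key : (fib (n+1) k).card * Dfac (n+1) k
        = n.factorial * k 1 + ∑ s ∈ Finset.range (n+1),
            ((∑ c : OrderedFinpartition n,
              typeOf c s * (if bump (typeOf c) s = k then (1:ℕ) else 0)) * Dfac (n+1) k) := by
      rw [hcard, Finset.sum_add_distrib, add_mul, hleft]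
      congr 1
      rw [Finset.sum_congr rfl (fun c _ => hmid c), Finset.sum_comm, Finset.sum_mul]
    have hMs : ∀ s ∈ Finset.range (n+1),
        ((∑ c : OrderedFinpartition n,
          typeOf c s * (if bump (typeOf c) s = k then (1:ℕ) else 0)) * Dfac (n+1) k)
        = if s = 0 then 0 else n.factorial * ((s+1) * k (s+1)) := by
      intro s hs
      by_cases h0 : s = 0
      · rw [h0, hM0, zero_mul, if_pos rfl]
      · rw [if_neg h0]
        exact hmids s (by omega) (by
          have := Finset.mem_range.1 hs
          omega)
    rw [key, Finset.sum_congr rfl hMs]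
    have e3 : (∑ s ∈ Finset.range (n+1),
        if s = 0 then 0 else n.factorial * ((s+1) * k (s+1)))
        = ∑ s ∈ Finset.range n, n.factorial * ((s+1+1) * k (s+1+1)) := by
      rw [Finset.sum_range_succ' _ n]
      rw [if_pos rfl, add_zero]
      refine Finset.sum_congr rfl fun s _ => ?_
      rw [if_neg (Nat.succ_ne_zero s)]
    have e4 : (1 * k 1) + ∑ s ∈ Finset.range n, ((s+1+1) * k (s+1+1)) = n + 1 := by
      have e5 : ∑ j ∈ Finset.range (n+2), j * k j
          = (∑ s ∈ Finset.range (n+1), (s+1) * k (s+1)) + 0 * k 0 :=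
        Finset.sum_range_succ' _ (n+1)
      have e6 : ∑ s ∈ Finset.range (n+1), (s+1) * k (s+1)
          = (∑ s ∈ Finset.range n, (s+1+1) * k (s+1+1)) + 1 * k 1 :=
        Finset.sum_range_succ' _ n
      omega
    rw [e3, ← Finset.mul_sum, Nat.factorial_succ]
    have e7 : k 1 + ∑ s ∈ Finset.range n, ((s+1+1) * k (s+1+1)) = n + 1 := by omega
    rw [← Nat.mul_add, e7]
    ring


lemma valid_delta (n : ℕ) (hn : 1 ≤ n) : Valid n (fun j => if j = n then 1 else 0) := by
  constructor
  · intro j hj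
    simp only [] at hj
    split_ifs at hj with h <;> omega
  · rw [Finset.sum_congr rfl (fun j (_ : j ∈ Finset.range (n+1)) =>
      (by split_ifs with h <;> simp [h] :
        (j * if j = n then 1 else 0) = if j = n then j else 0))]
    rw [Finset.sum_ite_eq' (Finset.range (n+1)) n (fun j => j)]
    rw [if_pos (Finset.self_mem_range_succ n)]

lemma Dfac_delta (n : ℕ) : Dfac n (fun j => if j = n then 1 else 0) = n.factorial := by
  rw [Dfac, ← Finset.mul_prod_erase _ _ (Finset.self_mem_range_succ n)]
  have h1 : ∏ j ∈ (Finset.range (n+1)).erase n,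
      (Nat.factorial j ^ (if j = n then 1 else 0) * Nat.factorial (if j = n then 1 else 0)) = 1 :=
    Finset.prod_eq_one fun j hj => by simp [Finset.ne_of_mem_erase hj]
  rw [h1]
  simp

lemma card_fib_delta (n : ℕ) (hn : 1 ≤ n) :
    (fib n (fun j => if j = n then 1 else 0)).card = 1 := by
  have h := card_fib_mul n _ (valid_delta n hn)
  rw [Dfac_delta] at h
  exact Nat.eq_of_mul_eq_mul_right n.factorial_pos (by simpa using h)

lemma typeOf_eq_delta {n : ℕ} (hn : 1 ≤ n) {c : OrderedFinpartition n}
    (h : typeOf c n ≠ 0) : typeOf c = fun j => if j = n then 1 else 0 :=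
  funext (valid_top (valid_typeOf c) h (by omega))

lemma sum_range_eq_fin {M : Type*} [AddCommMonoid M] (m : ℕ) (F : ℕ → M)
    (h0 : F 0 = 0) (hn0 : F (m+2) = 0) :
    ∑ j ∈ Finset.range (m+3), F j = ∑ j : Fin (m+1), F ((j : ℕ)+1) := by
  rw [Fin.sum_univ_eq_sum_range (fun j => F (j+1)) (m+1)]
  rw [Finset.sum_range_succ' F (m+2), h0, add_zero, Finset.sum_range_succ, hn0, add_zero]

lemma prod_range_eq_fin {M : Type*} [CommMonoid M] (m : ℕ) (F : ℕ → M)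
    (h0 : F 0 = 1) (hn0 : F (m+2) = 1) :
    ∏ j ∈ Finset.range (m+3), F j = ∏ j : Fin (m+1), F ((j : ℕ)+1) := by
  rw [Fin.prod_univ_eq_prod_range (fun j => F (j+1)) (m+1)]
  rw [Finset.prod_range_succ' F (m+2), h0, mul_one, Finset.prod_range_succ, hn0, mul_one]


lemma typeOf_le {n : ℕ} (c : OrderedFinpartition n) (j : ℕ) : typeOf c j ≤ n := by
  calc typeOf c j ≤ (Finset.univ : Finset (Fin c.length)).card := Finset.card_filter_le _ _
    _ = c.length := by simp
    _ ≤ n := c.length_le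

noncomputable def decode (m : ℕ) (c : OrderedFinpartition (m+2)) : Fin (m+1) → Fin (m+3) :=
  fun j => ⟨typeOf c ((j : ℕ)+1), by have := typeOf_le c ((j : ℕ)+1); omega⟩

def encode (m : ℕ) (κ : Fin (m+1) → Fin (m+3)) : ℕ → ℕ :=
  fun j => if h : 1 ≤ j ∧ j ≤ m+1 then (κ ⟨j-1, by omega⟩ : ℕ) else 0

lemma encode_succ (m : ℕ) (κ : Fin (m+1) → Fin (m+3)) (j : Fin (m+1)) :
    encode m κ ((j : ℕ)+1) = (κ j : ℕ) := by
  rw [encode, dif_pos ⟨by omega, by have := j.2; omega⟩]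
  congr 1

lemma encode_zero (m : ℕ) (κ : Fin (m+1) → Fin (m+3)) : encode m κ 0 = 0 :=
  dif_neg (by omega)

lemma encode_top (m : ℕ) (κ : Fin (m+1) → Fin (m+3)) : encode m κ (m+2) = 0 :=
  dif_neg (by omega)

lemma decode_eq_iff (m : ℕ) (c : OrderedFinpartition (m+2)) (κ : Fin (m+1) → Fin (m+3)) :
    (typeOf c (m+2) = 0 ∧ decode m c = κ) ↔ typeOf c = encode m κ := by
  constructor
  · rintro ⟨h0, hdec⟩
    funext j
    by_cases h : 1 ≤ j ∧ j ≤ m+1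
    · have hi : ((⟨j-1, by omega⟩ : Fin (m+1)) : ℕ) + 1 = j := by simp; omega
      have h2 := congrFun hdec ⟨j-1, by omega⟩
      have h3 := congrArg Fin.val h2
      rw [decode] at h3
      simp only [] at h3
      rw [encode, dif_pos h]
      rw [← h3]
      rw [hi]
    · rw [encode, dif_neg h]
      rcases Nat.lt_or_ge j 1 with h1 | h1
      · have : j = 0 := by omega
        subst this
        by_contra h2
        have := typeOf_support c h2
        omega
      · have h2 : j ≥ m + 2 := by omega
        rcases Nat.eq_or_lt_of_le h2 with h3 | h3
        · rw [← h3]; exact h0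
        · by_contra h4
          have := typeOf_support c h4
          omega
  · intro h
    constructor
    · rw [h]; exact encode_top m κ
    · funext j
      refine Fin.ext ?_
      show typeOf c ((j : ℕ)+1) = (κ j : ℕ)
      rw [h, encode_succ]

lemma valid_encode (m : ℕ) (κ : Fin (m+1) → Fin (m+3))
    (hκ : ∑ j : Fin (m+1), ((j : ℕ)+1) * (κ j : ℕ) = m+2) : Valid (m+2) (encode m κ) := by
  constructor
  · intro j hj
    by_cases h : 1 ≤ j ∧ j ≤ m+1
    · omega
    · rw [encode, dif_neg h] at hj
      omega
  · have h1 : ∑ j ∈ Finset.range (m+3), j * encode m κ j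
        = ∑ j : Fin (m+1), ((j : ℕ)+1) * encode m κ ((j : ℕ)+1) :=
      sum_range_eq_fin m (fun j => j * encode m κ j) (by simp)
        (by show (m+2) * encode m κ (m+2) = 0; rw [encode_top]; ring)
    rw [h1]
    refine (Finset.sum_congr rfl fun j _ => ?_).trans hκ
    rw [encode_succ]


lemma iterDW_open {h : ℝ → ℝ} {s : Set ℝ} (hs : IsOpen s) {x : ℝ} (hx : x ∈ s) (k : ℕ) :
    iteratedDerivWithin k h s x = iteratedDeriv k h x := by
  rw [iteratedDerivWithin_eq_iteratedFDerivWithin, iteratedDeriv_eq_iteratedFDeriv,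
    iteratedFDerivWithin_of_isOpen k hs hx]

lemma iterD_zero_fun (m : ℕ) (x : ℝ) : iteratedDeriv m (fun _ : ℝ => (0:ℝ)) x = 0 := by
  induction m generalizing x with
  | zero => simp [iteratedDeriv_zero]
  | succ m ih =>
    rw [iteratedDeriv_succ']
    simpa using ih x

lemma iterD_id (n : ℕ) (hn : 2 ≤ n) (x : ℝ) : iteratedDeriv n (id : ℝ → ℝ) x = 0 := by
  obtain ⟨m, rfl⟩ : ∃ m, n = m + 2 := ⟨n - 2, by omega⟩
  rw [show m + 2 = (m + 1) + 1 from rfl, iteratedDeriv_succ']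
  have h1 : deriv (id : ℝ → ℝ) = fun _ => (1:ℝ) := by funext y; exact deriv_id y
  rw [h1, iteratedDeriv_succ']
  have h2 : deriv (fun _ : ℝ => (1:ℝ)) = fun _ => (0:ℝ) := by funext y; exact deriv_const y 1
  rw [h2, iterD_zero_fun]

noncomputable def Wfun (m : ℕ) (f g : ℝ → ℝ) (x : ℝ) (k : ℕ → ℕ) : ℝ :=
  iteratedDeriv (∑ j ∈ Finset.range (m+3), k j) f (g x)
    * ∏ j ∈ Finset.range (m+3), iteratedDeriv j g x ^ k j

lemma Wfun_delta (m : ℕ) (f g : ℝ → ℝ) (x : ℝ) :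
    Wfun m f g x (fun j => if j = m+2 then 1 else 0)
      = deriv f (g x) * iteratedDeriv (m+2) g x := by
  rw [Wfun]
  have h1 : (∑ j ∈ Finset.range (m+3), if j = m+2 then 1 else 0) = 1 := by
    rw [Finset.sum_ite_eq' (Finset.range (m+3)) (m+2) (fun _ => 1)]
    rw [if_pos (Finset.mem_range.2 (by omega))]
  have h2 : (∏ j ∈ Finset.range (m+3), iteratedDeriv j g x ^ (if j = m+2 then 1 else 0))
      = iteratedDeriv (m+2) g x := by
    rw [← Finset.mul_prod_erase _ _ (Finset.mem_range.2 (show m+2 < m+3 by omega))]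
    rw [Finset.prod_eq_one (fun j hj => by rw [if_neg (Finset.ne_of_mem_erase hj), pow_zero])]
    simp
  rw [h1, h2, iteratedDeriv_one]

end Stmt19Aux

open Stmt19Aux

/-- Faà di Bruno type formula for the `n`-th derivative of the inverse
function (Lemma A.2). The tuples `(k₁, …, k_(n−1))` with `k₁ + 2k₂ + ⋯ + (n−1)k_(n−1) = n`
are encoded as functions `k : Fin (n−1) → Fin (n+1)`, `k j` standing for `k_(j+1)`
(each `k_j ≤ n` automatically). -/
theorem stmt19 (A B : Set ℝ) (hA : IsOpen A) (hB : IsOpen B) (n : ℕ) (hn : 2 ≤ n)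
    (f g : ℝ → ℝ) (hbij : Set.BijOn f A B) (hinv : Set.InvOn g f A B)
    (hf : ContDiffOn ℝ (n : ℕ∞) f A) (hf' : ∀ x ∈ A, deriv f x ≠ 0) :
    ContDiffOn ℝ (n : ℕ∞) g B ∧
    ∀ x ∈ B,
      iteratedDeriv n g x =
        -(1 / deriv f (g x)) *
          ∑ k ∈ Finset.univ.filter
              (fun k : Fin (n - 1) → Fin (n + 1) =>
                ∑ j : Fin (n - 1), ((j : ℕ) + 1) * (k j : ℕ) = n),
            ((n.factorial : ℝ) / ∏ j : Fin (n - 1), ((k j : ℕ).factorial : ℝ)) *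
              iteratedDeriv (∑ j : Fin (n - 1), (k j : ℕ)) f (g x) *
              ∏ j : Fin (n - 1),
                (iteratedDeriv ((j : ℕ) + 1) g x / (((j : ℕ) + 1).factorial : ℝ))
                  ^ (k j : ℕ) := by
  have hgBA : Set.MapsTo g B A := fun x hx => by
    obtain ⟨a, ha, rfl⟩ := hbij.surjOn hx
    rw [hinv.1 ha]; exact ha
  -- Part A: smoothness of g
  have hgAt : ∀ x ∈ B, ContDiffAt ℝ (n : ℕ∞) g x := by
    intro x hx
    obtain ⟨a, ha, rfl⟩ := hbij.surjOn hx
    have hfa : ContDiffAt ℝ (n : ℕ∞) f a := hf.contDiffAt (hA.mem_nhds ha)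
    have hd : DifferentiableAt ℝ f a :=
      (hfa.differentiableAt (by exact_mod_cast (by omega : n ≠ 0)))
    set u : ℝ ≃L[ℝ] ℝ := ContinuousLinearEquiv.unitsEquivAut ℝ (Units.mk0 _ (hf' a ha)) with hu
    have hfd : HasFDerivAt f (u : ℝ →L[ℝ] ℝ) a := by
      have h2 : HasFDerivAt f (ContinuousLinearMap.smulRight (1 : ℝ →L[ℝ] ℝ) (deriv f a)) a :=
        hd.hasDerivAt.hasFDerivAt
      convert h2 using 1
      ext; simp [hu]
    have hn1 : ((n : ℕ∞) : WithTop ℕ∞) ≠ 0 := by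
      exact_mod_cast (by omega : n ≠ 0)
    have hloc : ContDiffAt ℝ (n : ℕ∞) (hfa.localInverse hfd hn1) (f a) :=
      hfa.to_localInverse hfd hn1
    apply hloc.congr_of_eventuallyEq
    have h1 : ∀ᶠ y in nhds (f a), f ((hfa.localInverse hfd hn1) y) = y :=
      (hfa.hasStrictFDerivAt' hfd hn1).eventually_right_inverse
    have h2 : ∀ᶠ y in nhds (f a), (hfa.localInverse hfd hn1) y ∈ A := by
      have hcont : ContinuousAt (hfa.localInverse hfd hn1) (f a) :=
        (hfa.hasStrictFDerivAt' hfd hn1).localInverse_continuousAt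
      have heq : (hfa.localInverse hfd hn1) (f a) = a := hfa.localInverse_apply_image hfd hn1
      exact hcont.preimage_mem_nhds (hA.mem_nhds (by rw [heq]; exact ha))
    have h3 : ∀ᶠ y in nhds (f a), y ∈ B := hB.mem_nhds hx
    filter_upwards [h1, h2, h3] with y hy1 hy2 hy3
    have hfg : f (g y) = y := hinv.2 hy3
    exact hbij.injOn (hgBA hy3) hy2 (by rw [hfg, hy1])
  have hg : ContDiffOn ℝ (n : ℕ∞) g B := fun x hx => (hgAt x hx).contDiffWithinAt
  refine ⟨hg, ?_⟩
  intro x hx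
  have hd : deriv f (g x) ≠ 0 := hf' _ (hgBA hx)
  have hid : Set.EqOn (f ∘ g) id B := fun y hy => hinv.2 hy
  -- Part B: Faa di Bruno applied to f ∘ g = id
  have hkey : ∑ c : OrderedFinpartition n,
      iteratedDeriv c.length f (g x) * ∏ i, iteratedDeriv (c.partSize i) g x = 0 := by
    have hfT := hf.ftaylorSeriesWithin hA.uniqueDiffOn
    have hgT := hg.ftaylorSeriesWithin hB.uniqueDiffOn
    have hcomp := hfT.comp hgT hgBA
    have key := (hcomp.eq_iteratedFDerivWithin_of_uniqueDiffOn le_rfl hB.uniqueDiffOn hx).symm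
    have keyv := congrFun (congrArg DFunLike.coe key) (fun _ : Fin n => (1:ℝ))
    have hzero : iteratedFDerivWithin ℝ n (f ∘ g) B x (fun _ : Fin n => (1:ℝ)) = 0 := by
      rw [iteratedFDerivWithin_congr hid hx n]
      show iteratedDerivWithin n (id : ℝ → ℝ) B x = 0
      rw [iterDW_open hB hx, iterD_id n hn]
    rw [hzero] at keyv
    rw [show (ftaylorSeriesWithin ℝ f A (g x)).taylorComp (ftaylorSeriesWithin ℝ g B x) n
        = ∑ c : OrderedFinpartition n,
          (ftaylorSeriesWithin ℝ f A (g x)).compAlongOrderedFinpartition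
            (ftaylorSeriesWithin ℝ g B x) c from rfl] at keyv
    rw [ContinuousMultilinearMap.sum_apply] at keyv
    symm at keyv
    rw [← keyv]
    apply Finset.sum_congr rfl
    intro c _
    rw [FormalMultilinearSeries.compAlongOrderedFinpartition_apply]
    have happ : (c.applyOrderedFinpartition
        (fun m => (ftaylorSeriesWithin ℝ g B x (c.partSize m))) (fun _ : Fin n => (1:ℝ)))
        = fun m => (iteratedDeriv (c.partSize m) g x) • (1:ℝ) := by
      funext m
      rw [OrderedFinpartition.applyOrderedFinpartition_apply]
      show iteratedFDerivWithin ℝ (c.partSize m) g B x (fun _ => 1) = _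
      rw [← iteratedDerivWithin_eq_iteratedFDerivWithin, smul_eq_mul, mul_one,
        iterDW_open hB hx]
    rw [happ, ContinuousMultilinearMap.map_smul_univ]
    have h3 : (ftaylorSeriesWithin ℝ f A (g x) c.length) (fun _ => (1:ℝ))
        = iteratedDeriv c.length f (g x) := by
      show iteratedFDerivWithin ℝ c.length f A (g x) (fun _ => 1) = _
      rw [← iteratedDerivWithin_eq_iteratedFDerivWithin, iterDW_open hA (hgBA hx)]
    rw [h3, smul_eq_mul]
    ring
  clear hgAt hid
  obtain ⟨m, rfl⟩ : ∃ m, n = m + 2 := ⟨n - 2, by omega⟩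
  show iteratedDeriv (m+2) g x =
      -(1 / deriv f (g x)) *
        ∑ k ∈ Finset.univ.filter
            (fun k : Fin (m+1) → Fin (m+3) =>
              ∑ j : Fin (m+1), ((j : ℕ) + 1) * (k j : ℕ) = m+2),
          (((m+2).factorial : ℝ) / ∏ j : Fin (m+1), ((k j : ℕ).factorial : ℝ)) *
            iteratedDeriv (∑ j : Fin (m+1), (k j : ℕ)) f (g x) *
            ∏ j : Fin (m+1),
              (iteratedDeriv ((j : ℕ) + 1) g x / (((j : ℕ) + 1).factorial : ℝ))
                ^ (k j : ℕ)
  classical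
  -- Step 1: each term only depends on the type vector
  have step1 : ∀ c : OrderedFinpartition (m+2),
      iteratedDeriv c.length f (g x) * ∏ i, iteratedDeriv (c.partSize i) g x
        = Wfun m f g x (typeOf c) := by
    intro c
    rw [Wfun, ← length_eq_sum_typeOf c, ← fiber_prod c (fun j => iteratedDeriv j g x)]
  have htotal : ∑ c : OrderedFinpartition (m+2), Wfun m f g x (typeOf c) = 0 := by
    rw [← Finset.sum_congr rfl (fun c _ => step1 c)]
    exact hkey
  rw [← Finset.sum_filter_add_sum_filter_not Finset.univ
    (fun c : OrderedFinpartition (m+2) => typeOf c (m+2) = 0)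
    (fun c => Wfun m f g x (typeOf c))] at htotal
  -- the "big part" piece
  have hSB : ∑ c ∈ Finset.univ.filter
      (fun c : OrderedFinpartition (m+2) => ¬ typeOf c (m+2) = 0), Wfun m f g x (typeOf c)
      = deriv f (g x) * iteratedDeriv (m+2) g x := by
    have hset : Finset.univ.filter
        (fun c : OrderedFinpartition (m+2) => ¬ typeOf c (m+2) = 0)
        = fib (m+2) (fun j => if j = m+2 then 1 else 0) := by
      ext c
      simp only [Finset.mem_filter, Finset.mem_univ, true_and, fib]
      constructor
      · intro h; exact typeOf_eq_delta (by omega) h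
      · intro h; rw [h]; simp
    rw [hset]
    rw [Finset.sum_congr rfl (fun c hc => by
      rw [show typeOf c = (fun j => if j = m+2 then 1 else 0) from by
        have := Finset.mem_filter.1 hc; exact this.2])]
    rw [Finset.sum_const, card_fib_delta (m+2) (by omega), one_smul, Wfun_delta]
  -- the main piece
  have hmaps : ∀ c ∈ Finset.univ.filter
      (fun c : OrderedFinpartition (m+2) => typeOf c (m+2) = 0),
      decode m c ∈ Finset.univ.filter
        (fun k : Fin (m+1) → Fin (m+3) =>
          ∑ j : Fin (m+1), ((j : ℕ) + 1) * (k j : ℕ) = m+2) := by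
    intro c hc
    have hc0 : typeOf c (m+2) = 0 := (Finset.mem_filter.1 hc).2
    rw [Finset.mem_filter]
    refine ⟨Finset.mem_univ _, ?_⟩
    have h1 : ∑ j ∈ Finset.range (m+3), j * typeOf c j
        = ∑ j : Fin (m+1), ((j : ℕ)+1) * typeOf c ((j : ℕ)+1) :=
      sum_range_eq_fin m (fun j => j * typeOf c j) (by simp)
        (by show (m+2) * typeOf c (m+2) = 0; rw [hc0]; ring)
    have h2 := sum_mul_typeOf c
    rw [h1] at h2
    rw [← h2]
    rfl
  have hSA : ∑ c ∈ Finset.univ.filter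
      (fun c : OrderedFinpartition (m+2) => typeOf c (m+2) = 0), Wfun m f g x (typeOf c)
      = ∑ k ∈ Finset.univ.filter
            (fun k : Fin (m+1) → Fin (m+3) =>
              ∑ j : Fin (m+1), ((j : ℕ) + 1) * (k j : ℕ) = m+2),
          (((m+2).factorial : ℝ) / ∏ j : Fin (m+1), ((k j : ℕ).factorial : ℝ)) *
            iteratedDeriv (∑ j : Fin (m+1), (k j : ℕ)) f (g x) *
            ∏ j : Fin (m+1),
              (iteratedDeriv ((j : ℕ) + 1) g x / (((j : ℕ) + 1).factorial : ℝ))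
                ^ (k j : ℕ) := by
    rw [← Finset.sum_fiberwise_of_maps_to hmaps (fun c => Wfun m f g x (typeOf c))]
    refine Finset.sum_congr rfl fun κ hκ => ?_
    have hκ2 : ∑ j : Fin (m+1), ((j : ℕ) + 1) * (κ j : ℕ) = m+2 := (Finset.mem_filter.1 hκ).2
    -- identify the fiber with fib (m+2) (encode m κ)
    have hfib : (Finset.univ.filter
        (fun c : OrderedFinpartition (m+2) => typeOf c (m+2) = 0)).filter
          (fun c => decode m c = κ) = fib (m+2) (encode m κ) := by
      ext c
      simp only [Finset.mem_filter, Finset.mem_univ, true_and, fib]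
      exact decode_eq_iff m c κ
    rw [hfib]
    have hval := valid_encode m κ hκ2
    have hcard := card_fib_mul (m+2) (encode m κ) hval
    rw [Finset.sum_congr rfl (fun c hc => by
      rw [show typeOf c = encode m κ from (Finset.mem_filter.1 hc).2])]
    rw [Finset.sum_const, nsmul_eq_mul]
    have hW : Wfun m f g x (encode m κ)
        = iteratedDeriv (∑ j : Fin (m+1), (κ j : ℕ)) f (g x)
          * ∏ j : Fin (m+1), iteratedDeriv ((j:ℕ)+1) g x ^ (κ j : ℕ) := by
      rw [Wfun]
      have h1 : ∑ j ∈ Finset.range (m+3), encode m κ j = ∑ j : Fin (m+1), (κ j : ℕ) := by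
        rw [sum_range_eq_fin m (encode m κ) (encode_zero m κ) (encode_top m κ)]
        exact Finset.sum_congr rfl fun j _ => encode_succ m κ j
      have h2 : ∏ j ∈ Finset.range (m+3), iteratedDeriv j g x ^ encode m κ j
          = ∏ j : Fin (m+1), iteratedDeriv ((j:ℕ)+1) g x ^ (κ j : ℕ) := by
        rw [prod_range_eq_fin m (fun j => iteratedDeriv j g x ^ encode m κ j)
          (by show iteratedDeriv 0 g x ^ encode m κ 0 = 1; rw [encode_zero, pow_zero])
          (by show iteratedDeriv (m+2) g x ^ encode m κ (m+2) = 1; rw [encode_top, pow_zero])]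
        exact Finset.prod_congr rfl fun j _ => by rw [encode_succ]
      rw [h1, h2]
    rw [hW]
    have hDfac : Dfac (m+2) (encode m κ)
        = ∏ j : Fin (m+1), (Nat.factorial ((j:ℕ)+1) ^ (κ j : ℕ)
            * Nat.factorial (κ j : ℕ)) := by
      rw [Dfac]
      rw [prod_range_eq_fin m
        (fun j => Nat.factorial j ^ encode m κ j * Nat.factorial (encode m κ j))
        (by show Nat.factorial 0 ^ encode m κ 0 * Nat.factorial (encode m κ 0) = 1
            rw [encode_zero]; simp)
        (by show Nat.factorial (m+2) ^ encode m κ (m+2) * Nat.factorial (encode m κ (m+2)) = 1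
            rw [encode_top]; simp)]
      exact Finset.prod_congr rfl fun j _ => by rw [encode_succ]
    rw [hDfac] at hcard
    have h4 : ((fib (m+2) (encode m κ)).card : ℝ)
        * ∏ j : Fin (m+1), ((((j:ℕ)+1).factorial : ℝ) ^ (κ j : ℕ)
            * (((κ j : ℕ)).factorial : ℝ))
        = (((m+2)).factorial : ℝ) := by exact_mod_cast hcard
    rw [Finset.prod_mul_distrib] at h4
    have hne1 : (∏ j : Fin (m+1), (((j:ℕ)+1).factorial : ℝ) ^ (κ j : ℕ)) ≠ 0 := by
      positivity
    have hne2 : (∏ j : Fin (m+1), ((κ j : ℕ).factorial : ℝ)) ≠ 0 := by positivity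
    have hcardval : ((fib (m+2) (encode m κ)).card : ℝ)
        = (((m+2)).factorial : ℝ)
          / ((∏ j : Fin (m+1), (((j:ℕ)+1).factorial : ℝ) ^ (κ j : ℕ))
            * (∏ j : Fin (m+1), ((κ j : ℕ).factorial : ℝ))) := by
      rw [eq_div_iff (mul_ne_zero hne1 hne2)]
      rw [← h4]
    have hprodg : ∏ j : Fin (m+1),
        (iteratedDeriv ((j:ℕ)+1) g x / (((j:ℕ)+1).factorial : ℝ)) ^ (κ j : ℕ)
        = (∏ j : Fin (m+1), iteratedDeriv ((j:ℕ)+1) g x ^ (κ j : ℕ))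
          / (∏ j : Fin (m+1), (((j:ℕ)+1).factorial : ℝ) ^ (κ j : ℕ)) := by
      rw [← Finset.prod_div_distrib]
      exact Finset.prod_congr rfl fun j _ => div_pow _ _ _
    rw [hprodg, hcardval]
    field_simp
    try ring
  rw [hSA, hSB] at htotal
  set S := ∑ k ∈ Finset.univ.filter
        (fun k : Fin (m+1) → Fin (m+3) =>
          ∑ j : Fin (m+1), ((j : ℕ) + 1) * (k j : ℕ) = m+2),
      (((m+2).factorial : ℝ) / ∏ j : Fin (m+1), ((k j : ℕ).factorial : ℝ)) *
        iteratedDeriv (∑ j : Fin (m+1), (k j : ℕ)) f (g x) *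
        ∏ j : Fin (m+1),
          (iteratedDeriv ((j : ℕ) + 1) g x / (((j : ℕ) + 1).factorial : ℝ))
            ^ (k j : ℕ) with hSdef
  have h11 : S = -(deriv f (g x) * iteratedDeriv (m+2) g x) := by linarith
  have h10 : -(1 / deriv f (g x)) * S = -(S / deriv f (g x)) := by ring
  rw [h10, h11, neg_div, neg_neg, mul_div_cancel_left₀ _ hd]
end
end
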